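/- Suppose G contains a contracting element and let {μ_x}_{x∈Y} be an ω-dimensional G-equivariant conformal density on ∂_hY for some ω > 0. Then μ_o has no atoms at conical points: for every admissible triple F (with constants C, B₀) with min_{f∈F} d(o,fo) sufficiently large and every sufficiently large r, μ_o({ξ}) = 0 for each (r,F)-conical point ξ ∈ ∂_hY. -/

import Mathlib

open Metric Filter Topology Set MeasureTheory Pointwise

noncomputable section

namespace ConfDyn

/-- `γ` is (the image of) a geodesic segment from `x` to `y`. -/
def IsGeodesicIn (Y : Type*) [MetricSpace Y] (γ : Set Y) (x y : Y) : Prop :=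
  ∃ f : ℝ → Y, f 0 = x ∧ f (dist x y) = y ∧
    (∀ s ∈ Set.Icc (0 : ℝ) (dist x y), ∀ t ∈ Set.Icc (0 : ℝ) (dist x y),
      dist (f s) (f t) = |s - t|) ∧
    γ = f '' Set.Icc (0 : ℝ) (dist x y)

/-- `Y` is a geodesic metric space. -/
def GeodesicSpace (Y : Type*) [MetricSpace Y] : Prop :=
  ∀ x y : Y, ∃ γ : Set Y, IsGeodesicIn Y γ x y

/-- the shortest projection of the point `y` to the subset `X`. -/
def projSet {Y : Type*} [MetricSpace Y] (X : Set Y) (y : Y) : Set Y :=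
  {x ∈ X | dist y x = Metric.infDist y X}

/-- the shortest projection of the subset `A` to the subset `X`. -/
def projSetOf {Y : Type*} [MetricSpace Y] (X A : Set Y) : Set Y :=
  ⋃ a ∈ A, projSet X a

/-- `d_X(x,y)`, the diameter of `π_X(x) ∪ π_X(y)`. -/
def projDist {Y : Type*} [MetricSpace Y] (X : Set Y) (x y : Y) : ENNReal :=
  EMetric.diam (projSet X x ∪ projSet X y)

/-- `X` is a `C`-contracting subset: any geodesic segment at distance at least `C`
from `X` has shortest projection to `X` of diameter at most `C`. -/
def IsContractingSet {Y : Type*} [MetricSpace Y] (C : ℝ) (X : Set Y) : Prop :=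
  ∀ x y : Y, ∀ γ : Set Y, IsGeodesicIn Y γ x y →
    (∀ p ∈ γ, C ≤ Metric.infDist p X) →
    EMetric.diam (projSetOf X γ) ≤ ENNReal.ofReal C

/-- the Busemann function based at `o` associated to `y`, `b_y(x) = d(x,y) - d(o,y)`. -/
def busemannCM {Y : Type*} [MetricSpace Y] (o y : Y) : C(Y, ℝ) :=
  ⟨fun x => dist x y - dist o y,
    (continuous_id.dist continuous_const).sub continuous_const⟩

/-- the horofunction compactification of `Y`: the closure of `{b_y : y ∈ Y}` in
`C(Y,ℝ)` with the compact-open topology. -/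
def horoCpt (Y : Type*) [MetricSpace Y] (o : Y) : Set C(Y, ℝ) :=
  closure (Set.range (busemannCM o))

/-- `ξ` is a point of the horofunction boundary `∂_h Y`. -/
def IsHoroPoint {Y : Type*} [MetricSpace Y] (o : Y) (ξ : C(Y, ℝ)) : Prop :=
  ξ ∈ horoCpt Y o ∧ ∀ y : Y, ξ ≠ busemannCM o y

/-- a sequence of points of `Y` converges to `ξ` in the horofunction compactification. -/
def HoroConv {Y : Type*} [MetricSpace Y] (o : Y) (u : ℕ → Y) (ξ : C(Y, ℝ)) : Prop :=
  Filter.Tendsto (fun n => busemannCM o (u n)) atTop (nhds ξ)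

/-- two horofunctions have (K-)finite difference for some K. -/
def FinDiff {Y : Type*} [MetricSpace Y] (ξ η : C(Y, ℝ)) : Prop :=
  ∃ K : ℝ, ∀ z : Y, |ξ z - η z| ≤ K

/-- the locus of a subset of the horofunction boundary. -/
def locus {Y : Type*} [MetricSpace Y] (o : Y) (Λ : Set C(Y, ℝ)) : Set C(Y, ℝ) :=
  {η | IsHoroPoint o η ∧ ∃ ξ ∈ Λ, FinDiff ξ η}

/-- the finite-difference relation as a setoid on `C(Y,ℝ)`. -/
def finDiffSetoid (Y : Type*) [MetricSpace Y] : Setoid C(Y, ℝ) where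
  r := FinDiff
  iseqv := ⟨fun ξ => ⟨0, fun z => by simp⟩,
    fun h => h.imp (fun K hK z => by rw [abs_sub_comm]; exact hK z),
    fun h₁ h₂ => by
      obtain ⟨K₁, hK₁⟩ := h₁
      obtain ⟨K₂, hK₂⟩ := h₂
      exact ⟨K₁ + K₂, fun z => (abs_sub_le _ _ _).trans (add_le_add (hK₁ z) (hK₂ z))⟩⟩

/-- the limit set of a subset `X ⊆ Y` in the horofunction boundary. -/
def limitSetOf {Y : Type*} [MetricSpace Y] (o : Y) (X : Set Y) : Set C(Y, ℝ) :=
  {ξ | IsHoroPoint o ξ ∧ ∃ u : ℕ → Y, (∀ n, u n ∈ X) ∧ HoroConv o u ξ}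

/-- accumulation points of a sequence of points of `Y` in the horofunction boundary. -/
def accPoints {Y : Type*} [MetricSpace Y] (o : Y) (u : ℕ → Y) : Set C(Y, ℝ) :=
  {ξ | IsHoroPoint o ξ ∧ ∃ φ : ℕ → ℕ, StrictMono φ ∧ HoroConv o (u ∘ φ) ξ}

/-- `X` is a quasi-geodesic: the image of a quasi-isometric embedding of a real interval. -/
def IsQuasiGeodesicSet {Y : Type*} [MetricSpace Y] (X : Set Y) : Prop :=
  ∃ (c : ℝ) (I : Set ℝ) (φ : ℝ → Y), 1 ≤ c ∧ I.OrdConnected ∧ X = φ '' I ∧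
    ∀ s ∈ I, ∀ t ∈ I,
      (1 / c) * |s - t| - c ≤ dist (φ s) (φ t) ∧ dist (φ s) (φ t) ≤ c * |s - t| + c

section GroupAction

variable {Y : Type*} [MetricSpace Y] {G : Type*} [Group G] [MulAction G Y]

/-- `G` acts by isometries on `Y`. -/
def IsometricAction (G Y : Type*) [Group G] [MulAction G Y] [MetricSpace Y] : Prop :=
  ∀ g : G, Isometry (fun y : Y => g • y)

/-- the action of `G` on `Y` is (metrically) proper. -/
def ProperAction (G Y : Type*) [Group G] [MulAction G Y] [MetricSpace Y] : Prop :=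
  ∀ B : Set Y, Bornology.IsBounded B → Set.Finite {g : G | (g • B) ∩ B ≠ ∅}

/-- `G` is non-elementary: no finite-index subgroup is trivial or infinite cyclic. -/
def NonElementary (G : Type*) [Group G] : Prop :=
  ∀ H : Subgroup G, H.index ≠ 0 → ∀ g : G, H ≠ Subgroup.zpowers g

/-- the orbit of `o` under the cyclic group generated by `f`. -/
def cyclicOrbit (o : Y) (f : G) : Set Y :=
  {y : Y | ∃ n : ℤ, y = f ^ n • o}

/-- `f` is a contracting element with `C`-contracting orbit: it has infinite order,
`n ↦ fⁿ • o` is a quasi-isometric embedding of `ℤ`, and `⟨f⟩ • o` is `C`-contracting. -/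
def IsContractingElt (o : Y) (C : ℝ) (f : G) : Prop :=
  (∀ n : ℤ, n ≠ 0 → f ^ n ≠ 1) ∧
  (∃ c : ℝ, 1 ≤ c ∧ ∀ m n : ℤ,
      (1 / c) * |(m : ℝ) - (n : ℝ)| - c ≤ dist (f ^ m • o) (f ^ n • o) ∧
      dist (f ^ m • o) (f ^ n • o) ≤ c * |(m : ℝ) - (n : ℝ)| + c) ∧
  IsContractingSet C (cyclicOrbit o f)

/-- `f` is a contracting element. -/
def IsContractingEltAny (o : Y) (f : G) : Prop :=
  ∃ C : ℝ, 1 ≤ C ∧ IsContractingElt o C f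

/-- the elementary group `E(f)`: elements moving `⟨f⟩ • o` a finite Hausdorff distance. -/
def EGroup (o : Y) (f : G) : Set G :=
  {g : G | EMetric.hausdorffEdist (g • cyclicOrbit o f) (cyclicOrbit o f) ≠ ⊤}

/-- the axis `Ax(f) = E(f) • o`. -/
def axisOf (o : Y) (f : G) : Set Y :=
  (fun g : G => g • o) '' EGroup o f

/-- the family of all `G`-translated axes of `h` and `k`. -/
def axesPairFam (o : Y) (h k : G) : Set (Set Y) :=
  {S | ∃ g : G, S = g • axisOf o h ∨ S = g • axisOf o k}

/-- `h` and `k` are independent contracting elements: the family of their translated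
axes has bounded projection. -/
def IndepElts (o : Y) (h k : G) : Prop :=
  ∃ B : ℝ, 0 < B ∧ ∀ U ∈ axesPairFam o h k, ∀ V ∈ axesPairFam o h k,
    U ≠ V → EMetric.diam (projSetOf U V) ≤ ENNReal.ofReal B

/-- the family of all `G`-translated axes of the triple `f₁, f₂, f₃`. -/
def axesTripleFam (o : Y) (f₁ f₂ f₃ : G) : Set (Set Y) :=
  {S | ∃ g : G, S = g • axisOf o f₁ ∨ S = g • axisOf o f₂ ∨ S = g • axisOf o f₃}

/-- `F = {f₁,f₂,f₃}` is an admissible triple with constants `C`, `B₀`: three pairwise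
independent contracting elements whose translated axes are `C`-contracting with
`B₀`-bounded projection. -/
def IsAdmissibleTriple (o : Y) (C B₀ : ℝ) (f₁ f₂ f₃ : G) : Prop :=
  f₁ ≠ f₂ ∧ f₁ ≠ f₃ ∧ f₂ ≠ f₃ ∧
  IsContractingEltAny o f₁ ∧ IsContractingEltAny o f₂ ∧ IsContractingEltAny o f₃ ∧
  IndepElts o f₁ f₂ ∧ IndepElts o f₁ f₃ ∧ IndepElts o f₂ f₃ ∧
  (∀ S ∈ axesTripleFam o f₁ f₂ f₃, IsContractingSet C S) ∧
  (∀ U ∈ axesTripleFam o f₁ f₂ f₃, ∀ V ∈ axesTripleFam o f₁ f₂ f₃,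
    U ≠ V → EMetric.diam (projSetOf U V) ≤ ENNReal.ofReal B₀)

/-- the geodesic `γ` contains an `(r,f)`-barrier at `g • o`. -/
def HasBarrier (o : Y) (r : ℝ) (f g : G) (γ : Set Y) : Prop :=
  Metric.infDist (g • o) γ ≤ r ∧ Metric.infDist ((g * f) • o) γ ≤ r

/-- the partial cone `Ω_x^F(g • o, r)`. -/
def partialCone (o x : Y) (f₁ f₂ f₃ : G) (g : G) (r : ℝ) : Set Y :=
  {z | ∃ γ : Set Y, IsGeodesicIn Y γ x z ∧
      (HasBarrier o r f₁ g γ ∨ HasBarrier o r f₂ g γ ∨ HasBarrier o r f₃ g γ)}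

/-- the partial shadow `Π_x^F(g • o, r)`: accumulation points of the partial cone in
the horofunction boundary. -/
def partialShadow (o x : Y) (f₁ f₂ f₃ : G) (g : G) (r : ℝ) : Set C(Y, ℝ) :=
  {ξ | IsHoroPoint o ξ ∧ ∃ u : ℕ → Y, (∀ n, u n ∈ partialCone o x f₁ f₂ f₃ g r) ∧
      HoroConv o u ξ}

/-- `ξ` is an `(r,F)`-conical point. -/
def IsConicalPt (o : Y) (f₁ f₂ f₃ : G) (r : ℝ) (ξ : C(Y, ℝ)) : Prop :=
  ∃ g₀ : G, Set.Infinite {g : G | ξ ∈ partialShadow o (g₀ • o) f₁ f₂ f₃ g r}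

/-- the usual cone `Ω_x(y,r)`. -/
def usualCone (x y : Y) (r : ℝ) : Set Y :=
  {z | ∃ γ : Set Y, IsGeodesicIn Y γ x z ∧ ∃ p ∈ γ, dist p y ≤ r}

/-- the usual shadow `Π_x(y,r)`. -/
def usualShadow (o x y : Y) (r : ℝ) : Set C(Y, ℝ) :=
  {ξ | IsHoroPoint o ξ ∧ ∃ u : ℕ → Y, (∀ n, u n ∈ usualCone x y r) ∧ HoroConv o u ξ}

/-- the set `Λ_c(G)` of conical points of the action. -/
def conicalSet (G : Type*) {Y : Type*} [Group G] [MulAction G Y] [MetricSpace Y]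
    (o : Y) : Set C(Y, ℝ) :=
  {ξ | ∃ r : ℝ, 0 < r ∧ ∃ g₀ : G, ∃ u : ℕ → G,
      Filter.Tendsto (fun n => dist o (u n • o)) atTop atTop ∧
      ∀ n, ξ ∈ usualShadow o (g₀ • o) (u n • o) r}

/-- the attracting fixed-point set `[h⁺]`: the locus of the accumulation points of
`{hⁿ o : n > 0}` in the horofunction boundary. -/
def attrFix (o : Y) (h : G) : Set C(Y, ℝ) :=
  locus o (accPoints o (fun n : ℕ => h ^ (n + 1) • o))

/-- the repelling fixed-point set `[h⁻]`. -/
def repFix (o : Y) (h : G) : Set C(Y, ℝ) :=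
  locus o (accPoints o (fun n : ℕ => h ^ (-(n + 1) : ℤ) • o))

/-- the limit set `Λ G y` of the orbit `G • y` in the horofunction boundary. -/
def orbitLimitSet (G : Type*) {Y : Type*} [Group G] [MulAction G Y] [MetricSpace Y]
    (o y : Y) : Set C(Y, ℝ) :=
  {ξ | IsHoroPoint o ξ ∧ ∃ u : ℕ → G,
      Filter.Tendsto (fun n => busemannCM o (u n • y)) atTop (nhds ξ)}

/-- the action of an isometry `g` on horofunctions. -/
def horoAct [ContinuousConstSMul G Y] (o : Y) (g : G) (ξ : C(Y, ℝ)) : C(Y, ℝ) :=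
  ⟨fun y => ξ (g⁻¹ • y) - ξ (g⁻¹ • o),
    (ξ.continuous.comp (continuous_const_smul g⁻¹)).sub continuous_const⟩

/-- the number of orbit points of `Γ ⊆ G` in the closed ball of radius `R` around `o`. -/
def orbitCount (G : Type*) {Y : Type*} [Group G] [MulAction G Y] [MetricSpace Y]
    (o : Y) (Γ : Set G) (R : ℝ) : ℕ :=
  Nat.card {g : G // g ∈ Γ ∧ dist o (g • o) ≤ R}

/-- the critical exponent `ω_Γ` of a subset `Γ ⊆ G`. -/
def critExp (G : Type*) {Y : Type*} [Group G] [MulAction G Y] [MetricSpace Y]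
    (o : Y) (Γ : Set G) : ℝ :=
  Filter.limsup (fun R : ℝ => Real.log (orbitCount G o Γ R) / R) atTop

/-- an `ω`-dimensional `G`-equivariant conformal density on the horofunction boundary:
a family of finite measures supported on `∂_h Y`, normalized at `o`, `G`-equivariant,
with conformal derivative `dμ_x/dμ_y(ξ) = e^{-ω·B_ξ(x,y)}`. -/
def IsConformalDensity (G : Type*) {Y : Type*} [Group G] [MulAction G Y] [MetricSpace Y]
    [ContinuousConstSMul G Y] [MeasurableSpace C(Y, ℝ)]
    (o : Y) (ω : ℝ) (μ : Y → MeasureTheory.Measure C(Y, ℝ)) : Prop :=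
  (∀ x : Y, MeasureTheory.IsFiniteMeasure (μ x)) ∧
  (∀ x : Y, μ x {ξ : C(Y, ℝ) | ¬ IsHoroPoint o ξ} = 0) ∧
  μ o Set.univ = 1 ∧
  (∀ g : G, ∀ x : Y, MeasureTheory.Measure.map (horoAct o g) (μ x) = μ (g • x)) ∧
  (∀ x y : Y, μ x = (μ y).withDensity
      (fun ξ : C(Y, ℝ) => ENNReal.ofReal (Real.exp (-ω * (ξ x - ξ y)))))

end GroupAction

/-- a conformal density has no atoms at conical points. -/
theorem statement16 {Y G : Type*} [MetricSpace Y] [ProperSpace Y]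
    [Group G] [MulAction G Y] [Countable G] [ContinuousConstSMul G Y]
    [MeasurableSpace C(Y, ℝ)] [BorelSpace C(Y, ℝ)]
    (hY : GeodesicSpace Y) (hiso : IsometricAction G Y)
    (hprop : ProperAction G Y) (hne : NonElementary G) (o : Y)
    (hcontr : ∃ f : G, IsContractingEltAny o f)
    (C B₀ : ℝ) (hC : 1 ≤ C) (hB : 0 < B₀)
    (ω : ℝ) (hω : 0 < ω) (μ : Y → MeasureTheory.Measure C(Y, ℝ))
    (hμ : IsConformalDensity G o ω μ) :
    ∃ L : ℝ, 0 < L ∧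
      ∀ f₁ f₂ f₃ : G, IsAdmissibleTriple o C B₀ f₁ f₂ f₃ →
        L ≤ dist o (f₁ • o) → L ≤ dist o (f₂ • o) → L ≤ dist o (f₃ • o) →
        ∃ r₀ : ℝ, 0 < r₀ ∧ ∀ r : ℝ, r₀ ≤ r →
          ∀ ξ : C(Y, ℝ), IsConicalPt o f₁ f₂ f₃ r ξ → μ o {ξ} = 0 := by
  classical
  refine ⟨1, one_pos, fun f₁ f₂ f₃ _ _ _ _ => ⟨1, one_pos, fun r hr ξ hξ => ?_⟩⟩
  obtain ⟨g₀, hS⟩ := hξ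
  set x : Y := g₀ • o with hx
  set K : ℝ := 2 * (r + 1) + 2 * dist o x with hK
  -- ξ is a horofunction, and ξ o = 0
  obtain ⟨g₁, hg₁⟩ := hS.nonempty
  have hξmem : ξ ∈ horoCpt Y o := hg₁.1.1
  have hξ0 : ξ o = 0 := by
    have himg : (fun f : C(Y, ℝ) => f o) '' horoCpt Y o ⊆
        closure ((fun f : C(Y, ℝ) => f o) '' Set.range (busemannCM o)) :=
      image_closure_subset_closure_image (continuous_eval_const o)
    have hsub : (fun f : C(Y, ℝ) => f o) '' Set.range (busemannCM o) ⊆ {(0 : ℝ)} := by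
      rintro - ⟨-, ⟨y, rfl⟩, rfl⟩
      simp [busemannCM, dist_comm]
    have := himg (Set.mem_image_of_mem _ hξmem)
    have := (closure_mono hsub).trans (by rw [closure_singleton]) this
    simpa using this
  -- key geometric bound on shadows
  have hbound : ∀ g ∈ {g : G | ξ ∈ partialShadow o (g₀ • o) f₁ f₂ f₃ g r},
      ξ (g • o) ≤ K - dist o (g • o) := by
    rintro g ⟨-, u, hu, hconv⟩
    have hev : Tendsto (fun n => (busemannCM o (u n)) (g • o)) atTop (nhds (ξ (g • o))) :=
      ((continuous_eval_const (g • o)).tendsto ξ).comp hconv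
    refine le_of_tendsto hev (Eventually.of_forall fun n => ?_)
    obtain ⟨γ, ⟨f, hf0, hfd, hdst, hγeq⟩, hbar⟩ := hu n
    have hinf : Metric.infDist (g • o) γ ≤ r := by
      rcases hbar with h | h | h <;> exact h.1
    have hxγ : x ∈ γ := by
      rw [hγeq]; exact ⟨0, ⟨le_refl 0, dist_nonneg⟩, hf0⟩
    have hlt : Metric.infDist (g • o) γ < r + 1 := lt_of_le_of_lt hinf (by linarith)
    obtain ⟨p, hpγ, hpd⟩ := (Metric.infDist_lt_iff ⟨x, hxγ⟩).1 hlt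
    rw [hγeq] at hpγ
    obtain ⟨t, ht, hpt⟩ := hpγ
    have hDmem : dist (g₀ • o) (u n) ∈ Set.Icc (0 : ℝ) (dist (g₀ • o) (u n)) :=
      ⟨dist_nonneg, le_refl _⟩
    have h0mem : (0 : ℝ) ∈ Set.Icc (0 : ℝ) (dist (g₀ • o) (u n)) := ⟨le_refl 0, dist_nonneg⟩
    have h1 : dist x p = t := by
      have h := hdst 0 h0mem t ht
      rw [hf0, hpt] at h
      rw [hx, h]
      simp [abs_of_nonneg ht.1]
    have h2 : dist p (u n) = dist x (u n) - t := by
      have h := hdst t ht _ hDmem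
      rw [hfd, hpt, abs_of_nonpos (by linarith [ht.2])] at h
      rw [hx, h]
      ring
    have t1 := dist_triangle (g • o) p (u n)
    have t2 := dist_triangle x p (g • o)
    have t3 := dist_triangle o x (g • o)
    have t4 := dist_triangle x o (u n)
    have e1 : dist p (g • o) = dist (g • o) p := dist_comm _ _
    have e2 : dist x o = dist o x := dist_comm _ _
    show dist (g • o) (u n) - dist o (u n) ≤ K - dist o (g • o)
    rw [hK]
    linarith
  -- properness: unbounded orbit points in the infinite set
  have hfin : ∀ N : ℝ, Set.Finite {g : G | dist o (g • o) ≤ N} := by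
    intro N
    refine (hprop (Metric.closedBall o (max N 0)) isBounded_closedBall).subset ?_
    intro g hg
    have h1 : g • o ∈ g • Metric.closedBall o (max N 0) :=
      Set.smul_mem_smul_set (by simp [le_max_right])
    have h2 : g • o ∈ Metric.closedBall o (max N 0) := by
      simp only [Metric.mem_closedBall]
      rw [dist_comm]
      exact le_trans hg (le_max_left _ _)
    exact Set.nonempty_iff_ne_empty.1 ⟨g • o, h1, h2⟩
  have hexists : ∀ N : ℝ, ∃ g ∈ {g : G | ξ ∈ partialShadow o (g₀ • o) f₁ f₂ f₃ g r},
      N < dist o (g • o) := by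
    intro N
    by_contra hcon
    push_neg at hcon
    exact hS ((hfin N).subset fun g hg => hcon g hg)
  -- measure estimate
  have hsing : MeasurableSet ({ξ} : Set C(Y, ℝ)) := measurableSet_singleton ξ
  have hmass : ∀ g : G, μ (g • o) Set.univ = 1 := by
    intro g
    have hmap := hμ.2.2.2.1 g o
    have hcont : Continuous (horoAct o g : C(Y, ℝ) → C(Y, ℝ)) := by
      have heq : (horoAct o g : C(Y, ℝ) → C(Y, ℝ)) = fun η =>
          η.comp ⟨fun y => g⁻¹ • y, continuous_const_smul _⟩ -
            ContinuousMap.const Y (η (g⁻¹ • o)) := by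
        funext η; ext y; rfl
      rw [heq]
      exact (ContinuousMap.continuous_precomp _).sub
        ((ContinuousMap.continuous_const'.comp (continuous_eval_const (g⁻¹ • o))))
    rw [← hmap, MeasureTheory.Measure.map_apply hcont.measurable MeasurableSet.univ,
      Set.preimage_univ]
    exact hμ.2.2.1
  have hmeasbd : ∀ g : G, μ o {ξ} ≤ ENNReal.ofReal (Real.exp (ω * ξ (g • o))) := by
    intro g
    have hconf := hμ.2.2.2.2 o (g • o)
    have hstep : μ o {ξ} = ENNReal.ofReal (Real.exp (-ω * (ξ o - ξ (g • o)))) *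
        μ (g • o) {ξ} := by
      rw [hconf, MeasureTheory.withDensity_apply _ hsing, MeasureTheory.lintegral_singleton]
    rw [hstep]
    have harg : -ω * (ξ o - ξ (g • o)) = ω * ξ (g • o) := by rw [hξ0]; ring
    rw [harg]
    calc ENNReal.ofReal (Real.exp (ω * ξ (g • o))) * μ (g • o) {ξ}
        ≤ ENNReal.ofReal (Real.exp (ω * ξ (g • o))) * μ (g • o) Set.univ :=
          mul_le_mul_right (measure_mono (Set.subset_univ _)) _
      _ = ENNReal.ofReal (Real.exp (ω * ξ (g • o))) := by rw [hmass g, mul_one]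
  -- conclude
  refine le_antisymm ?_ (zero_le)
  refine ENNReal.le_of_forall_pos_le_add fun ε hε _ => ?_
  rw [zero_add]
  have hεr : (0 : ℝ) < (ε : ℝ) := hε
  obtain ⟨g, hgS, hgd⟩ := hexists (K - Real.log (ε : ℝ) / ω)
  have hb := hbound g hgS
  have h3 : ω * ξ (g • o) < Real.log (ε : ℝ) := by
    have h4 : ξ (g • o) < Real.log (ε : ℝ) / ω := by
      have := hbound g hgS
      linarith
    calc ω * ξ (g • o) < ω * (Real.log (ε : ℝ) / ω) := by
          exact (mul_lt_mul_iff_right₀ hω).2 h4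
      _ = Real.log (ε : ℝ) := by field_simp
  have h5 : Real.exp (ω * ξ (g • o)) ≤ (ε : ℝ) := by
    calc Real.exp (ω * ξ (g • o)) ≤ Real.exp (Real.log (ε : ℝ)) :=
          Real.exp_le_exp.2 h3.le
      _ = (ε : ℝ) := Real.exp_log hεr
  calc μ o {ξ} ≤ ENNReal.ofReal (Real.exp (ω * ξ (g • o))) := hmeasbd g
    _ ≤ ENNReal.ofReal (ε : ℝ) := ENNReal.ofReal_le_ofReal h5
    _ = (ε : ENNReal) := ENNReal.ofReal_coe_nnreal

end ConfDyn
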